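/- (Proposition 1, part 2.) Suppose each point deviates from its cluster centroid by at most σ l, i.e. for all l and i, ‖V l i - C l‖² ≤ (σ l)². Then the expected squared error between the group centroid and the global centroid under uniform random selection is bounded by (1/L²) ∑ l, (σ l)²: (1/n^L) ∑_{s : Fin L → Fin n} ‖G s - Cg‖² ≤ (1/L²) ∑ l, (σ l)². -/
import Mathlib

open scoped BigOperators RealInnerProductSpace

lemma marg_aux {ι : Type*} [Fintype ι] [DecidableEq ι] {n : ℕ} (i0 : ι) (ψ : Fin n → ℝ) :
    ∑ g : ι → Fin n, ψ (g i0) = (n : ℝ) ^ (Fintype.card ι - 1) * ∑ j, ψ j := by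
  have e1 : ∑ g : ι → Fin n, ψ (g i0)
      = ∑ p : Fin n × ({j : ι // j ≠ i0} → Fin n), ψ p.1 :=
    Fintype.sum_equiv (Equiv.piSplitAt i0 fun _ => Fin n) _ _ fun g => rfl
  rw [e1, Fintype.sum_prod_type]
  have hcard : Fintype.card ({j : ι // j ≠ i0} → Fin n) = n ^ (Fintype.card ι - 1) := by
    simp [Fintype.card_fun, Fintype.card_subtype_compl]
  simp only [Finset.sum_const, Finset.card_univ, hcard, nsmul_eq_mul]
  rw [← Finset.mul_sum]
  push_cast
  ring

lemma cross_aux {F L n : ℕ} (X : Fin L → Fin n → EuclideanSpace ℝ (Fin F))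
    (hX : ∀ l, ∑ i, X l i = 0) {l m : Fin L} (hlm : m ≠ l) :
    ∑ s : Fin L → Fin n, ⟪X l (s l), X m (s m)⟫ = 0 := by
  have e1 : ∑ s : Fin L → Fin n, ⟪X l (s l), X m (s m)⟫
      = ∑ p : Fin n × ({j : Fin L // j ≠ l} → Fin n), ⟪X l p.1, X m (p.2 ⟨m, hlm⟩)⟫ :=
    Fintype.sum_equiv (Equiv.piSplitAt l fun _ => Fin n) _ _ fun s => rfl
  rw [e1, Fintype.sum_prod_type]
  have h : ∀ x : Fin n,
      ∑ h : {j : Fin L // j ≠ l} → Fin n, ⟪X l x, X m (h ⟨m, hlm⟩)⟫ = 0 := by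
    intro x
    rw [marg_aux (ι := {j : Fin L // j ≠ l}) ⟨m, hlm⟩ (fun j => ⟪X l x, X m j⟫),
      ← inner_sum, hX m, inner_zero_right, mul_zero]
  exact Finset.sum_eq_zero fun x _ => h x

theorem group_centroid_error_bound
    (F L n : ℕ) (hL : 1 ≤ L) (hn : 1 ≤ n)
    (V : Fin L → Fin n → EuclideanSpace ℝ (Fin F))
    (C : Fin L → EuclideanSpace ℝ (Fin F))
    (hC : ∀ l, C l = (1 / (n : ℝ)) • ∑ i, V l i)
    (Cg : EuclideanSpace ℝ (Fin F))
    (hCg : Cg = (1 / (L : ℝ)) • ∑ l, C l)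
    (G : (Fin L → Fin n) → EuclideanSpace ℝ (Fin F))
    (hG : ∀ s, G s = (1 / (L : ℝ)) • ∑ l, V l (s l))
    (σ : Fin L → ℝ) (hσ : ∀ l, 0 ≤ σ l)
    (hdev : ∀ l i, ‖V l i - C l‖ ^ 2 ≤ (σ l) ^ 2) :
    (1 / (n : ℝ) ^ L) * ∑ s : Fin L → Fin n, ‖G s - Cg‖ ^ 2 ≤
      (1 / (L : ℝ) ^ 2) * ∑ l, (σ l) ^ 2 := by
  have hn0 : (n : ℝ) ≠ 0 := Nat.cast_ne_zero.mpr (by omega)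
  have hL0 : (L : ℝ) ≠ 0 := Nat.cast_ne_zero.mpr (by omega)
  set X : Fin L → Fin n → EuclideanSpace ℝ (Fin F) := fun l i => V l i - C l with hXdef
  have hX0 : ∀ l, ∑ i, X l i = 0 := by
    intro l
    have hnC : (n : ℝ) • C l = ∑ i, V l i := by
      rw [hC l, smul_smul, mul_one_div, div_self hn0, one_smul]
    simp only [hXdef, Finset.sum_sub_distrib, Finset.sum_const, Finset.card_univ,
      Fintype.card_fin]
    rw [← Nat.cast_smul_eq_nsmul ℝ, hnC, sub_self]
  have key : ∀ s, G s - Cg = (1 / (L : ℝ)) • ∑ l, X l (s l) := by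
    intro s
    rw [hG, hCg, ← smul_sub, ← Finset.sum_sub_distrib]
  have hnorm : ∀ s : Fin L → Fin n,
      ‖G s - Cg‖ ^ 2 = (1 / (L : ℝ) ^ 2) * ‖∑ l, X l (s l)‖ ^ 2 := by
    intro s
    rw [key s, norm_smul, mul_pow, Real.norm_eq_abs, sq_abs, div_pow, one_pow]
  have expand : ∀ s : Fin L → Fin n,
      ‖∑ l, X l (s l)‖ ^ 2 = ∑ l, ∑ m, ⟪X l (s l), X m (s m)⟫ := by
    intro s
    rw [← real_inner_self_eq_norm_sq, sum_inner]
    exact Finset.sum_congr rfl fun l _ => by rw [inner_sum]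
  have main : ∑ s : Fin L → Fin n, ‖∑ l, X l (s l)‖ ^ 2 ≤ (n : ℝ) ^ L * ∑ l, σ l ^ 2 := by
    calc ∑ s : Fin L → Fin n, ‖∑ l, X l (s l)‖ ^ 2
        = ∑ s : Fin L → Fin n, ∑ l, ∑ m, ⟪X l (s l), X m (s m)⟫ :=
          Finset.sum_congr rfl fun s _ => expand s
      _ = ∑ l, ∑ m, ∑ s : Fin L → Fin n, ⟪X l (s l), X m (s m)⟫ := by
          rw [Finset.sum_comm]
          exact Finset.sum_congr rfl fun l _ => Finset.sum_comm
      _ = ∑ l, ∑ s : Fin L → Fin n, ‖X l (s l)‖ ^ 2 := by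
          refine Finset.sum_congr rfl fun l _ => ?_
          rw [Finset.sum_eq_single l]
          · exact Finset.sum_congr rfl fun s _ => real_inner_self_eq_norm_sq _
          · intro m _ hm
            exact cross_aux X hX0 hm
          · intro h; exact absurd (Finset.mem_univ l) h
      _ = ∑ l, (n : ℝ) ^ (L - 1) * ∑ i, ‖X l i‖ ^ 2 := by
          refine Finset.sum_congr rfl fun l _ => ?_
          rw [marg_aux l (fun i => ‖X l i‖ ^ 2)]
          simp
      _ ≤ ∑ l, (n : ℝ) ^ (L - 1) * ((n : ℝ) * σ l ^ 2) := by
          refine Finset.sum_le_sum fun l _ => ?_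
          refine mul_le_mul_of_nonneg_left ?_ (by positivity)
          calc ∑ i, ‖X l i‖ ^ 2 ≤ ∑ _i : Fin n, σ l ^ 2 :=
                Finset.sum_le_sum fun i _ => hdev l i
            _ = (n : ℝ) * σ l ^ 2 := by simp [mul_comm]
      _ = (n : ℝ) ^ L * ∑ l, σ l ^ 2 := by
          rw [show ((n : ℝ)) ^ L = (n : ℝ) ^ (L - 1) * (n : ℝ) by
            rw [← pow_succ]; congr 1; omega]
          rw [Finset.mul_sum]
          exact Finset.sum_congr rfl fun l _ => by ring
  calc (1 / (n : ℝ) ^ L) * ∑ s : Fin L → Fin n, ‖G s - Cg‖ ^ 2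
      = (1 / (n : ℝ) ^ L) * ((1 / (L : ℝ) ^ 2) * ∑ s : Fin L → Fin n, ‖∑ l, X l (s l)‖ ^ 2) := by
        rw [Finset.sum_congr rfl fun s _ => hnorm s, ← Finset.mul_sum]
    _ ≤ (1 / (n : ℝ) ^ L) * ((1 / (L : ℝ) ^ 2) * ((n : ℝ) ^ L * ∑ l, σ l ^ 2)) := by
        have h1 : (0:ℝ) ≤ 1 / (n : ℝ) ^ L := by positivity
        have h2 : (0:ℝ) ≤ 1 / (L : ℝ) ^ 2 := by positivity
        exact mul_le_mul_of_nonneg_left (mul_le_mul_of_nonneg_left main h2) h1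
    _ = (1 / (L : ℝ) ^ 2) * ∑ l, σ l ^ 2 := by
        field_simp
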